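/- Let G be a Borel probability measure on ℝ, ν > 0, z ∈ ℝ, k ≥ 1 an integer, and ρ ∈ (0, 1/(e√(2π))). Let f_{G,ν}(z) = ∫ φ((z−τ)/ν) ν⁻¹ dG(τ). Then there exists a constant C_k depending only on k such that | ∫ ((z−τ)/ν)^k φ((z−τ)/ν) ν⁻¹ dG(τ) | / ( f_{G,ν}(z) ∨ (ρ/ν) ) ≤ C_k (log(1/(√(2π)ρ)))^{k/2}. -/

import Mathlib

open MeasureTheory

/-- The standard normal density `φ(t) = (2π)^{-1/2} exp(−t²/2)`. -/
noncomputable def gaussPdf (t : ℝ) : ℝ := (Real.sqrt (2 * Real.pi))⁻¹ * Real.exp (-(t ^ 2) / 2)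

/-- The Gaussian mixture density `f_{G,ν}(z) = ∫ φ((z−τ)/ν) ν⁻¹ dG(τ)`. -/
noncomputable def mixDens (G : Measure ℝ) (ν z : ℝ) : ℝ :=
  ∫ τ, gaussPdf ((z - τ) / ν) * ν⁻¹ ∂G

lemma gaussPdf_nonneg (t : ℝ) : 0 ≤ gaussPdf t := by
  unfold gaussPdf; positivity

lemma gaussPdf_le (t : ℝ) : gaussPdf t ≤ (Real.sqrt (2 * Real.pi))⁻¹ := by
  unfold gaussPdf
  have h : Real.exp (-(t ^ 2) / 2) ≤ 1 := Real.exp_le_one_iff.2 (by nlinarith [sq_nonneg t])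
  have h0 : (0:ℝ) ≤ (Real.sqrt (2 * Real.pi))⁻¹ := by positivity
  nlinarith

lemma gaussPdf_continuous : Continuous gaussPdf := by
  unfold gaussPdf; continuity

/-- Key pointwise bound. -/
lemma ptwise (k : ℕ) (t T : ℝ) (hT : Real.sqrt 2 ≤ T) :
    |t| ^ k * gaussPdf t ≤
      Real.exp (1 + (k:ℝ)^2/4) * T ^ k * (gaussPdf t + gaussPdf T) := by
  have hT0 : 0 < T := lt_of_lt_of_le (by positivity) hT
  have hT2 : 2 ≤ T ^ 2 := by
    nlinarith [Real.sq_sqrt (by norm_num : (2:ℝ) ≥ 0), Real.sqrt_nonneg 2]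
  have hE : (1:ℝ) ≤ Real.exp (1 + (k:ℝ)^2/4) := by
    rw [show (1:ℝ) = Real.exp 0 by simp]
    exact Real.exp_le_exp.2 (by positivity)
  have hgt := gaussPdf_nonneg t
  have hgT := gaussPdf_nonneg T
  have hTk : (0:ℝ) ≤ T ^ k := by positivity
  rcases le_or_gt |t| T with h | h
  · have h1 : |t| ^ k ≤ T ^ k := pow_le_pow_left₀ (abs_nonneg t) h k
    nlinarith [mul_le_mul_of_nonneg_right h1 hgt,
      mul_nonneg (mul_nonneg (sub_nonneg.2 hE) hTk) hgt,
      mul_nonneg (mul_nonneg (le_trans zero_le_one hE) hTk) hgT]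
  · set r : ℝ := |t| / T with hr_def
    have hr : 1 < r := (one_lt_div hT0).2 h
    have htr : |t| = r * T := by rw [hr_def, div_mul_cancel₀ _ hT0.ne']
    have ht2 : t ^ 2 = r ^ 2 * T ^ 2 := by
      rw [← sq_abs t, htr]; ring
    have hrk : r ^ k ≤ Real.exp ((k:ℝ) * (r - 1)) := by
      have hr0 : (0:ℝ) < r := by linarith
      calc r ^ k = Real.exp (Real.log r) ^ k := by rw [Real.exp_log hr0]
        _ = Real.exp ((k:ℝ) * Real.log r) := by rw [← Real.exp_nat_mul]
        _ ≤ Real.exp ((k:ℝ) * (r - 1)) := by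
            have hk0 : (0:ℝ) ≤ (k:ℝ) := Nat.cast_nonneg k
            have := Real.log_le_sub_one_of_pos hr0
            apply Real.exp_le_exp.2
            nlinarith
    have hexp : (k:ℝ) * (r - 1) ≤ 1 + (k:ℝ)^2/4 + (t^2 - T^2)/2 := by
      have hk0 : (0:ℝ) ≤ (k:ℝ) := by positivity
      rw [ht2]
      nlinarith [sq_nonneg (r - (k:ℝ)/2), mul_nonneg (sub_nonneg.2 hT2)
        (by nlinarith : (0:ℝ) ≤ r ^ 2 - 1)]
    have key : |t| ^ k * Real.exp (-(t^2)/2) ≤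
        Real.exp (1 + (k:ℝ)^2/4) * T ^ k * Real.exp (-(T^2)/2) := by
      have h1 : r ^ k * Real.exp (-(t^2)/2) ≤
          Real.exp (1 + (k:ℝ)^2/4) * Real.exp (-(T^2)/2) := by
        calc r ^ k * Real.exp (-(t^2)/2)
            ≤ Real.exp ((k:ℝ) * (r - 1)) * Real.exp (-(t^2)/2) := by
              exact mul_le_mul_of_nonneg_right hrk (Real.exp_pos _).le
          _ = Real.exp ((k:ℝ) * (r - 1) + -(t^2)/2) := by rw [← Real.exp_add]
          _ ≤ Real.exp (1 + (k:ℝ)^2/4 + (t^2 - T^2)/2 + -(t^2)/2) := by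
              apply Real.exp_le_exp.2; linarith
          _ = Real.exp (1 + (k:ℝ)^2/4) * Real.exp (-(T^2)/2) := by
              rw [← Real.exp_add]; ring_nf
      calc |t| ^ k * Real.exp (-(t^2)/2) = (r ^ k * Real.exp (-(t^2)/2)) * T ^ k := by
            rw [htr, mul_pow]; ring
        _ ≤ (Real.exp (1 + (k:ℝ)^2/4) * Real.exp (-(T^2)/2)) * T ^ k :=
            mul_le_mul_of_nonneg_right h1 hTk
        _ = Real.exp (1 + (k:ℝ)^2/4) * T ^ k * Real.exp (-(T^2)/2) := by ring
    have hc : (0:ℝ) ≤ (Real.sqrt (2 * Real.pi))⁻¹ := by positivity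
    have hE0 : (0:ℝ) ≤ Real.exp (1 + (k:ℝ)^2/4) := (Real.exp_pos _).le
    calc |t| ^ k * gaussPdf t
        = (Real.sqrt (2 * Real.pi))⁻¹ * (|t| ^ k * Real.exp (-(t^2)/2)) := by
          unfold gaussPdf; ring
      _ ≤ (Real.sqrt (2 * Real.pi))⁻¹ *
            (Real.exp (1 + (k:ℝ)^2/4) * T ^ k * Real.exp (-(T^2)/2)) :=
          mul_le_mul_of_nonneg_left key hc
      _ = Real.exp (1 + (k:ℝ)^2/4) * T ^ k * gaussPdf T := by
          unfold gaussPdf; ring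
      _ ≤ Real.exp (1 + (k:ℝ)^2/4) * T ^ k * (gaussPdf t + gaussPdf T) :=
          mul_le_mul_of_nonneg_left (le_add_of_nonneg_left hgt) (mul_nonneg hE0 hTk)

lemma int_gauss (G : Measure ℝ) [IsProbabilityMeasure G] (ν z : ℝ) :
    Integrable (fun τ => gaussPdf ((z - τ) / ν)) G := by
  apply Integrable.mono' (integrable_const ((Real.sqrt (2 * Real.pi))⁻¹))
  · exact (gaussPdf_continuous.comp (by continuity)).aestronglyMeasurable
  · filter_upwards with τ
    rw [Real.norm_eq_abs, abs_of_nonneg (gaussPdf_nonneg _)]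
    exact gaussPdf_le _

theorem truncated_posterior_moment_bound (k : ℕ) (hk : 1 ≤ k) :
    ∃ C : ℝ, 0 < C ∧
      ∀ (G : Measure ℝ), IsProbabilityMeasure G →
      ∀ (ν : ℝ), 0 < ν → ∀ (z : ℝ) (ρ : ℝ),
        ρ ∈ Set.Ioo (0:ℝ) (1 / (Real.exp 1 * Real.sqrt (2 * Real.pi))) →
        |∫ τ, ((z - τ) / ν) ^ k * gaussPdf ((z - τ) / ν) * ν⁻¹ ∂G|
            / (mixDens G ν z ⊔ (ρ / ν))
          ≤ C * (Real.log (1 / (Real.sqrt (2 * Real.pi) * ρ))) ^ ((k : ℝ) / 2) := by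
  set E : ℝ := Real.exp (1 + (k:ℝ)^2/4) with hE_def
  refine ⟨2 * E * (Real.sqrt 2) ^ k, by positivity, ?_⟩
  intro G hG ν hν z ρ hρ
  obtain ⟨hρ0, hρ1⟩ := hρ
  have hs : (0:ℝ) < Real.sqrt (2 * Real.pi) := Real.sqrt_pos.2 (by positivity)
  set L : ℝ := Real.log (1 / (Real.sqrt (2 * Real.pi) * ρ)) with hL_def
  have hsρ : (0:ℝ) < Real.sqrt (2 * Real.pi) * ρ := by positivity
  have hL1 : 1 < L := by
    have h1 : Real.sqrt (2 * Real.pi) * ρ < (Real.exp 1)⁻¹ := by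
      have := mul_lt_mul_of_pos_left hρ1 hs
      calc Real.sqrt (2 * Real.pi) * ρ
          < Real.sqrt (2 * Real.pi) * (1 / (Real.exp 1 * Real.sqrt (2 * Real.pi))) := this
        _ = (Real.exp 1)⁻¹ := by field_simp
    have h2 : Real.log (Real.sqrt (2 * Real.pi) * ρ) < Real.log (Real.exp 1)⁻¹ :=
      Real.log_lt_log hsρ h1
    rw [Real.log_inv, Real.log_exp] at h2
    rw [hL_def, one_div, Real.log_inv]
    linarith
  have hL0 : (0:ℝ) ≤ L := by linarith
  set T : ℝ := Real.sqrt (2 * L) with hT_def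
  have hT : Real.sqrt 2 ≤ T := Real.sqrt_le_sqrt (by linarith)
  have hT2 : T ^ 2 = 2 * L := Real.sq_sqrt (by linarith)
  have hgT : gaussPdf T = ρ := by
    unfold gaussPdf
    rw [hT2]
    have : -(2 * L) / 2 = Real.log (Real.sqrt (2 * Real.pi) * ρ) := by
      rw [hL_def, one_div, Real.log_inv]; ring
    rw [this, Real.exp_log hsρ]
    field_simp
  have hTk : T ^ k = (Real.sqrt 2) ^ k * L ^ ((k:ℝ)/2) := by
    rw [hT_def, Real.sqrt_mul (by norm_num : (0:ℝ) ≤ 2), mul_pow]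
    congr 1
    rw [Real.sqrt_eq_rpow, ← Real.rpow_natCast (L ^ ((1:ℝ)/2)) k, ← Real.rpow_mul hL0,
      show (1:ℝ)/2 * (k:ℝ) = (k:ℝ)/2 by ring]
  -- denominator positivity
  have hmix : 0 ≤ mixDens G ν z :=
    integral_nonneg fun τ => mul_nonneg (gaussPdf_nonneg _) (by positivity)
  have hden : (0:ℝ) < mixDens G ν z ⊔ (ρ / ν) :=
    lt_of_lt_of_le (by positivity) (le_max_right _ _)
  -- integrability of dominating function
  have hint1 : Integrable (fun τ => gaussPdf ((z - τ) / ν) * ν⁻¹) G :=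
    (int_gauss G ν z).mul_const _
  have hintdom : Integrable
      (fun τ => E * T ^ k * (gaussPdf ((z - τ) / ν) * ν⁻¹ + ρ * ν⁻¹)) G :=
    ((hint1.add (integrable_const _)).const_mul _)
  -- pointwise bound
  have hbound : ∀ τ : ℝ, |((z - τ) / ν) ^ k * gaussPdf ((z - τ) / ν) * ν⁻¹| ≤
      E * T ^ k * (gaussPdf ((z - τ) / ν) * ν⁻¹ + ρ * ν⁻¹) := by
    intro τ
    set t := (z - τ) / ν
    have h1 : |t ^ k * gaussPdf t * ν⁻¹| = |t| ^ k * gaussPdf t * ν⁻¹ := by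
      rw [abs_mul, abs_mul, abs_pow, abs_of_nonneg (gaussPdf_nonneg _),
        abs_of_nonneg (by positivity : (0:ℝ) ≤ ν⁻¹)]
    rw [h1]
    have h2 := ptwise k t T hT
    rw [hgT] at h2
    have h3 : |t| ^ k * gaussPdf t * ν⁻¹ ≤ (E * T ^ k * (gaussPdf t + ρ)) * ν⁻¹ :=
      mul_le_mul_of_nonneg_right h2 (by positivity)
    calc |t| ^ k * gaussPdf t * ν⁻¹ ≤ (E * T ^ k * (gaussPdf t + ρ)) * ν⁻¹ := h3
      _ = E * T ^ k * (gaussPdf t * ν⁻¹ + ρ * ν⁻¹) := by ring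
  -- numerator bound
  have hnum : |∫ τ, ((z - τ) / ν) ^ k * gaussPdf ((z - τ) / ν) * ν⁻¹ ∂G| ≤
      E * T ^ k * (mixDens G ν z + ρ * ν⁻¹) := by
    have habs := norm_integral_le_integral_norm
      (f := fun τ => ((z - τ) / ν) ^ k * gaussPdf ((z - τ) / ν) * ν⁻¹) (μ := G)
    simp only [Real.norm_eq_abs] at habs
    calc |∫ τ, ((z - τ) / ν) ^ k * gaussPdf ((z - τ) / ν) * ν⁻¹ ∂G|
        ≤ ∫ τ, |((z - τ) / ν) ^ k * gaussPdf ((z - τ) / ν) * ν⁻¹| ∂G := habs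
      _ ≤ ∫ τ, E * T ^ k * (gaussPdf ((z - τ) / ν) * ν⁻¹ + ρ * ν⁻¹) ∂G :=
          integral_mono_of_nonneg (Filter.Eventually.of_forall fun τ => abs_nonneg _)
            hintdom (Filter.Eventually.of_forall hbound)
      _ = E * T ^ k * (mixDens G ν z + ρ * ν⁻¹) := by
          rw [integral_const_mul, integral_add hint1 (integrable_const _),
            integral_const]
          simp [mixDens]
  have hsum : mixDens G ν z + ρ * ν⁻¹ ≤ 2 * (mixDens G ν z ⊔ (ρ / ν)) := by
    have h1 := le_max_left (mixDens G ν z) (ρ / ν)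
    have h2 : ρ * ν⁻¹ ≤ mixDens G ν z ⊔ (ρ / ν) := by
      rw [← div_eq_mul_inv]; exact le_max_right _ _
    linarith
  rw [div_le_iff₀ hden]
  have hLk : (0:ℝ) ≤ L ^ ((k:ℝ)/2) := Real.rpow_nonneg hL0 _
  have hE0 : 0 < E := Real.exp_pos _
  calc |∫ τ, ((z - τ) / ν) ^ k * gaussPdf ((z - τ) / ν) * ν⁻¹ ∂G|
      ≤ E * T ^ k * (mixDens G ν z + ρ * ν⁻¹) := hnum
    _ ≤ E * T ^ k * (2 * (mixDens G ν z ⊔ (ρ / ν))) := by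
        apply mul_le_mul_of_nonneg_left hsum (by positivity)
    _ = 2 * E * (Real.sqrt 2) ^ k * L ^ ((k:ℝ)/2) * (mixDens G ν z ⊔ (ρ / ν)) := by
        rw [hTk]; ring
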